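/- For any CSAM with all agents optimistic, the worst-case egalitarian rank is n^p; equivalently, for every order O over agent–category pairs there exists an agent j such that k_{j,O_j(l)} = 1 for all l ≥ K_j. -/

import Mathlib

open scoped Classical

/-- A bundle in a basic categorized domain: one item (from `Fin n`) per category (`Fin p`). -/
abbrev Bundle (n p : ℕ) := Fin p → Fin n

/-- A preference: a binary relation on bundles (`R a b` means `a` is strictly preferred to `b`). -/
abbrev Pref (n p : ℕ) := Bundle n p → Bundle n p → Prop

/-- A profile assigns a preference to each of the `n` agents. -/
abbrev Profile (n p : ℕ) := Fin n → Pref n p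

/-- A categorial sequential allocation mechanism: a linear order over agent–category
pairs, i.e. a bijection from rounds `Fin (n*p)` to pairs. -/
abbrev Csam (n p : ℕ) := Fin (n * p) ≃ Fin n × Fin p

/-- All preferences in the profile are strict linear orders. -/
def ValidProfile {n p : ℕ} (P : Profile n p) : Prop :=
  ∀ j, IsStrictTotalOrder (Bundle n p) (P j)

/-- A valid allocation: in every category, no item is given to two agents. -/
def ValidAlloc {n p : ℕ} (A : Fin n → Bundle n p) : Prop :=
  ∀ i : Fin p, Function.Injective fun j => A j i

/-- The rank of bundle `b` in preference `R` (1 = best, `n^p` = worst). -/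
noncomputable def rank {n p : ℕ} (R : Pref n p) (b : Bundle n p) : ℕ :=
  1 + (Finset.univ.filter fun c => R c b).card

/-- `kval O j i`: the number of category-`i` items still available when agent `j`
picks from category `i` (depends only on `O`). -/
def kval {n p : ℕ} (O : Csam n p) (j : Fin n) (i : Fin p) : ℕ :=
  1 + (Finset.univ.filter fun j' : Fin n => O.symm (j, i) < O.symm (j', i)).card

/-- `Oj O j l`: the `l`-th category (0-based) that agent `j` visits in `O`. -/
noncomputable def Oj {n p : ℕ} (O : Csam n p) (j : Fin n) (l : Fin p) : Fin p :=
  (O ((Finset.univ.image fun i : Fin p => O.symm (j, i)).orderIsoOfFin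
      (by
        rw [Finset.card_image_of_injective _
          (fun a b h => congrArg Prod.snd (O.symm.injective h))]
        simp) l).1).2

/-- `NoInterruptF O j K`: for every later position `l > K` of agent `j`, no other agent
picks from category `Oj O j l` between agent `j`'s pick in category `Oj O j K`
and her pick in category `Oj O j l`. -/
def NoInterruptF {n p : ℕ} (O : Csam n p) (j : Fin n) (K : ℕ) : Prop :=
  ∀ lK : Fin p, (lK : ℕ) = K → ∀ l : Fin p, lK < l → ∀ j' : Fin n, j' ≠ j →
    ¬ (O.symm (j, Oj O j lK) < O.symm (j', Oj O j l) ∧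
       O.symm (j', Oj O j l) < O.symm (j, Oj O j l))

/-- `Kval O j`: the smallest (0-based) index `K` such that agent `j` is not interrupted
from position `K` onwards. -/
noncomputable def Kval {n p : ℕ} (O : Csam n p) (j : Fin n) : ℕ :=
  sInf {K : ℕ | K < p ∧ NoInterruptF O j K}

/-- Item `d` of category `i` is still available at round `t` under final allocation `A`. -/
def availAt {n p : ℕ} (O : Csam n p) (A : Fin n → Bundle n p) (t : Fin (n * p))
    (i : Fin p) (d : Fin n) : Prop :=
  ∀ j' : Fin n, O.symm (j', i) < t → A j' i ≠ d

/-- Bundle `b` is still achievable by agent `j` at round `t`: it agrees with her previous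
choices and all remaining components are still available. -/
def achievable {n p : ℕ} (O : Csam n p) (A : Fin n → Bundle n p) (j : Fin n)
    (t : Fin (n * p)) (b : Bundle n p) : Prop :=
  (∀ c : Fin p, O.symm (j, c) < t → b c = A j c) ∧
  (∀ c : Fin p, ¬ O.symm (j, c) < t → availAt O A t c (b c))

/-- Agent `j` plays optimistically in the run producing allocation `A`: at each of her
rounds she picks the item of her top-ranked still-achievable bundle. -/
def OptPlays {n p : ℕ} (O : Csam n p) (P : Profile n p) (A : Fin n → Bundle n p)
    (j : Fin n) : Prop :=
  ∀ i : Fin p, ∃ b : Bundle n p, achievable O A j (O.symm (j, i)) b ∧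
    (∀ b' : Bundle n p, achievable O A j (O.symm (j, i)) b' → b' ≠ b → P j b b') ∧
    A j i = b i

/-- Agent `j` plays pessimistically in the run producing `A`: at each of her rounds, for
every available alternative item `d'`, some achievable bundle with component `d'` is worse
than every achievable bundle with the component she actually chose. -/
def PesPlays {n p : ℕ} (O : Csam n p) (P : Profile n p) (A : Fin n → Bundle n p)
    (j : Fin n) : Prop :=
  ∀ i : Fin p, ∀ d' : Fin n, availAt O A (O.symm (j, i)) i d' → d' ≠ A j i →
    ∃ w' : Bundle n p, achievable O A j (O.symm (j, i)) w' ∧ w' i = d' ∧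
      ∀ w : Bundle n p, achievable O A j (O.symm (j, i)) w → w i = A j i → P j w w'

/-- `∏_{l = K_j}^{p} k_{j, O_j(l)}`. -/
noncomputable def optProd {n p : ℕ} (O : Csam n p) (j : Fin n) : ℕ :=
  ∏ l ∈ Finset.univ.filter (fun l : Fin p => Kval O j ≤ (l : ℕ)), kval O j (Oj O j l)

/-- `∑_{l = 1}^{p} (k_{j, O_j(l)} - 1)`. -/
noncomputable def pesSum {n p : ℕ} (O : Csam n p) (j : Fin n) : ℕ :=
  ∑ l : Fin p, (kval O j (Oj O j l) - 1)

-- scratch: basic Oj lemmas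
section AuxOj
variable {n p : ℕ}

lemma card_image_symm (O : Csam n p) (j : Fin n) :
    (Finset.univ.image fun i : Fin p => O.symm (j, i)).card = p := by
  rw [Finset.card_image_of_injective _
    (fun a b h => congrArg Prod.snd (O.symm.injective h))]
  simp

lemma symm_Oj (O : Csam n p) (j : Fin n) (l : Fin p) :
    O.symm (j, Oj O j l) =
      (((Finset.univ.image fun i : Fin p => O.symm (j, i)).orderIsoOfFin
        (card_image_symm O j) l) : Fin (n * p)) := by
  set s := Finset.univ.image fun i : Fin p => O.symm (j, i) with hs
  set x : Fin (n * p) := ((s.orderIsoOfFin (card_image_symm O j) l) : Fin (n * p)) with hx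
  have hmem : x ∈ s := (s.orderIsoOfFin (card_image_symm O j) l).2
  rw [hs] at hmem
  obtain ⟨i, _, hi⟩ := Finset.mem_image.1 hmem
  have hOx : O x = (j, i) := by rw [← hi]; exact O.apply_symm_apply _
  have hOj : Oj O j l = i := by
    show (O x).2 = i
    rw [hOx]
  rw [hOj, ← hi]

lemma symm_Oj_strictMono (O : Csam n p) (j : Fin n) :
    StrictMono fun l : Fin p => O.symm (j, Oj O j l) := by
  intro a b hab
  simp only []
  rw [symm_Oj, symm_Oj]
  exact Subtype.coe_lt_coe.2
    (((Finset.univ.image fun i : Fin p => O.symm (j, i)).orderIsoOfFin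
      (card_image_symm O j)).strictMono hab)

lemma Oj_surj (O : Csam n p) (j : Fin n) (i : Fin p) : ∃ l : Fin p, Oj O j l = i := by
  set s := Finset.univ.image fun i : Fin p => O.symm (j, i) with hs
  have hmem : O.symm (j, i) ∈ s := Finset.mem_image_of_mem _ (Finset.mem_univ i)
  obtain ⟨l, hl⟩ := (s.orderIsoOfFin (card_image_symm O j)).surjective ⟨_, hmem⟩
  refine ⟨l, ?_⟩
  have : O.symm (j, Oj O j l) = O.symm (j, i) := by
    rw [symm_Oj]
    exact congrArg Subtype.val hl
  have := O.symm.injective this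
  exact congrArg Prod.snd this

end AuxOj
section AuxK
variable {n p : ℕ}

lemma kval_eq_one_iff (O : Csam n p) (j : Fin n) (i : Fin p) :
    kval O j i = 1 ↔ ∀ j' : Fin n, ¬ O.symm (j, i) < O.symm (j', i) := by
  unfold kval
  rw [Nat.add_eq_left, Finset.card_eq_zero, Finset.filter_eq_empty_iff]
  simp

lemma KvalSet_nonempty (O : Csam n p) (j : Fin n) (hp : 0 < p) :
    (p - 1) ∈ {K : ℕ | K < p ∧ NoInterruptF O j K} := by
  refine ⟨by omega, ?_⟩
  intro lK hK l hl j' hj' _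
  have h1 : (lK : ℕ) < (l : ℕ) := hl
  have h2 : (l : ℕ) < p := l.2
  omega

lemma Kval_lt (O : Csam n p) (j : Fin n) (hp : 0 < p) : Kval O j < p :=
  (Nat.sInf_mem ⟨p - 1, KvalSet_nonempty O j hp⟩).1

lemma Kval_noInterrupt (O : Csam n p) (j : Fin n) (hp : 0 < p) :
    NoInterruptF O j (Kval O j) :=
  (Nat.sInf_mem (⟨p - 1, KvalSet_nonempty O j hp⟩ :
    Set.Nonempty {K : ℕ | K < p ∧ NoInterruptF O j K})).2

lemma noInterrupt_mono (O : Csam n p) (j : Fin n) {K K' : ℕ}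
    (h : NoInterruptF O j K) (hKK : K ≤ K') (hK : K < p) :
    NoInterruptF O j K' := by
  intro lK' hK' l hl j' hj' hint
  have hKp : K < p := hK
  have hle : (⟨K, hKp⟩ : Fin p) ≤ lK' := by
    rw [Fin.le_def]; simpa [hK'] using hKK
  have hmono : O.symm (j, Oj O j ⟨K, hKp⟩) ≤ O.symm (j, Oj O j lK') :=
    ((symm_Oj_strictMono O j).monotone hle : _)
  exact h ⟨K, hKp⟩ rfl l (lt_of_le_of_lt hle hl) j' hj'
    ⟨lt_of_le_of_lt hmono hint.1, hint.2⟩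

/-- The key combinatorial fact: some agent is "good". -/
lemma exists_good (n p : ℕ) (hn : 0 < n) (hp : 0 < p) (O : Csam n p) :
    ∃ j : Fin n, ∀ l : Fin p, Kval O j ≤ (l : ℕ) → kval O j (Oj O j l) = 1 := by
  by_contra hbad
  push_neg at hbad
  -- m j : minimal m such that all positions ≥ m are final
  set M : Fin n → Set ℕ :=
    fun j => {m : ℕ | ∀ l : Fin p, m ≤ (l : ℕ) → kval O j (Oj O j l) = 1} with hM
  have hMne : ∀ j, (M j).Nonempty := by
    intro j
    exact ⟨p, fun l hl => absurd hl (by have := l.2; omega)⟩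
  set m : Fin n → ℕ := fun j => sInf (M j) with hm
  have hmmem : ∀ j, m j ∈ M j := fun j => Nat.sInf_mem (hMne j)
  have hKlt : ∀ j, Kval O j < m j := by
    intro j
    by_contra hle
    push_neg at hle
    obtain ⟨l, hKl, hne⟩ := hbad j
    exact hne (hmmem j l (le_trans hle hKl))
  have hm1 : ∀ j, 1 ≤ m j := fun j => by have := hKlt j; omega
  have hmle : ∀ j, m j ≤ p := fun j =>
    Nat.sInf_le (fun l hl => absurd hl (by have := l.2; omega))
  -- the "bad position" lb j with value m j - 1, not final
  have hlb : ∀ j, ∃ lb : Fin p, (lb : ℕ) = m j - 1 ∧ kval O j (Oj O j lb) ≠ 1 := by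
    intro j
    have hlt1 : m j - 1 < m j := by have := hm1 j; omega
    have hnm : (m j - 1) ∉ M j := Nat.notMem_of_lt_sInf hlt1
    have hnm' : ¬ ∀ l : Fin p, (m j - 1) ≤ (l : ℕ) → kval O j (Oj O j l) = 1 := hnm
    push_neg at hnm'
    obtain ⟨l, hl1, hl2⟩ := hnm'
    refine ⟨l, ?_, hl2⟩
    have : ¬ m j ≤ (l : ℕ) := fun hc => hl2 (hmmem j l hc)
    omega
  choose lb hlbval hlbbad using hlb
  set τ : Fin n → Fin (n * p) := fun j => O.symm (j, Oj O j (lb j)) with hτ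
  obtain ⟨j, _, hjmax⟩ := Finset.exists_max_image (Finset.univ : Finset (Fin n)) τ
    ⟨⟨0, hn⟩, Finset.mem_univ _⟩
  -- c : the bad category of j ; j' : last picker of c
  set c : Fin p := Oj O j (lb j) with hc
  have hj₀' : ∃ j₀ : Fin n, O.symm (j, c) < O.symm (j₀, c) := by
    have h := hlbbad j
    rw [Ne, kval_eq_one_iff] at h
    push_neg at h
    exact h
  obtain ⟨j₀, hj₀⟩ := hj₀'
  obtain ⟨j', _, hj'max⟩ := Finset.exists_max_image (Finset.univ : Finset (Fin n))
    (fun j₂ => O.symm (j₂, c)) ⟨⟨0, hn⟩, Finset.mem_univ _⟩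
  have hjj' : O.symm (j, c) < O.symm (j', c) :=
    lt_of_lt_of_le hj₀ (hj'max j₀ (Finset.mem_univ _))
  have hne : j ≠ j' := by
    intro h; rw [h] at hjj'; exact lt_irrefl _ hjj'
  obtain ⟨l', hl'⟩ := Oj_surj O j' c
  -- τ j = O.symm (j, c)
  have hτj : τ j = O.symm (j, c) := rfl
  rcases le_or_gt (m j') (l' : ℕ) with h | h
  · -- c is in j''s final block: use NoInterrupt at m j' - 1
    have hNI : NoInterruptF O j' (m j' - 1) :=
      noInterrupt_mono O j' (Kval_noInterrupt O j' hp)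
        (by have := hKlt j'; omega) (Kval_lt O j' hp)
    have hlt : lb j' < l' := by
      rw [Fin.lt_def, hlbval j']
      have := hm1 j'
      omega
    have := hNI (lb j') (hlbval j') l' hlt j hne
    rw [hl'] at this
    push_neg at this
    have hle : O.symm (j, c) ≤ O.symm (j', Oj O j' (lb j')) :=
      le_of_not_gt (fun hc => absurd hjj' (by simpa using this hc))
    have hle2 : τ j' ≤ τ j := hjmax j' (Finset.mem_univ _)
    have heq : τ j = τ j' := le_antisymm (by rw [hτj]; exact hle) hle2
    have : (j, c) = (j', Oj O j' (lb j')) := O.symm.injective heq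
    exact hne (congrArg Prod.fst this)
  · -- c is a final position of j' before its block
    have hle : l' ≤ lb j' := by
      rw [Fin.le_def, hlbval j']
      omega
    have h1 : O.symm (j', c) ≤ τ j' := by
      rw [← hl']
      exact (symm_Oj_strictMono O j').monotone hle
    have h2 : τ j' ≤ τ j := hjmax j' (Finset.mem_univ _)
    have := lt_of_lt_of_le hjj' (le_trans h1 h2)
    rw [hτj] at this
    exact lt_irrefl _ this

end AuxK
section AuxP
variable {n p : ℕ}

/-- constant bundle -/
def cst (n p : ℕ) (j : Fin n) : Bundle n p := fun _ => j

/-- the canonical allocation: agent j gets item j everywhere -/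
def AA (n p : ℕ) : Fin n → Bundle n p := fun j _ => j

lemma ach_cst (O : Csam n p) (j : Fin n) (t : Fin (n * p)) :
    achievable O (AA n p) j t (cst n p j) := by
  constructor
  · intro c _; rfl
  · intro c hc j₂ h₂
    intro hd
    have : j₂ = j := hd
    rw [this] at h₂
    exact hc h₂

lemma ach_mono (O : Csam n p) (j : Fin n) {t t' : Fin (n * p)} (htt : t' ≤ t)
    {b : Bundle n p} (hb : achievable O (AA n p) j t b) :
    achievable O (AA n p) j t' b := by
  obtain ⟨h1, h2⟩ := hb
  constructor
  · intro c hc; exact h1 c (lt_of_lt_of_le hc htt)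
  · intro c hc
    by_cases hct : O.symm (j, c) < t
    · have hbc : b c = j := h1 c hct
      intro j₂ h₂ hd
      have : j₂ = b c := hd
      rw [hbc] at this
      rw [this] at h₂
      exact hc h₂
    · intro j₂ h₂
      exact h2 c hct j₂ (lt_of_lt_of_le h₂ htt)

noncomputable def enc (n p : ℕ) : Bundle n p → ℕ := fun b => (Fintype.equivFin (Bundle n p)) b

lemma card_bundle (n p : ℕ) : Fintype.card (Bundle n p) = n ^ p := by
  simp [Bundle, Fintype.card_fun]

lemma enc_lt (b : Bundle n p) : enc n p b < n ^ p := by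
  unfold enc
  have h1 := ((Fintype.equivFin (Bundle n p)) b).2
  have h2 := card_bundle n p
  omega

lemma enc_inj : Function.Injective (enc n p) := fun a b h =>
  (Fintype.equivFin (Bundle n p)).injective (Fin.ext h)

/-- rank function with a distinguished top -/
noncomputable def rkO (n p : ℕ) (top : Bundle n p) : Bundle n p → ℕ :=
  fun b => if b = top then n ^ p else enc n p b

/-- rank function with a distinguished top and bottom -/
noncomputable def rkS (n p : ℕ) (top bot : Bundle n p) : Bundle n p → ℕ :=
  fun b => if b = bot then 0 else if b = top then n ^ p + 1 else enc n p b + 1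

lemma rkO_inj (top : Bundle n p) : Function.Injective (rkO n p top) := by
  intro a b h
  unfold rkO at h
  have ha := enc_lt a
  have hb := enc_lt b
  rcases eq_or_ne a top with h1 | h1 <;> rcases eq_or_ne b top with h2 | h2
  · rw [h1, h2]
  · rw [if_pos h1, if_neg h2] at h; omega
  · rw [if_neg h1, if_pos h2] at h; omega
  · rw [if_neg h1, if_neg h2] at h; exact enc_inj h

lemma rkS_inj (top bot : Bundle n p) : Function.Injective (rkS n p top bot) := by
  intro a b h
  unfold rkS at h
  have ha := enc_lt a
  have hb := enc_lt b
  rcases eq_or_ne a bot with h1 | h1 <;> rcases eq_or_ne b bot with h2 | h2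
  · rw [h1, h2]
  · rw [if_pos h1, if_neg h2] at h; split_ifs at h <;> omega
  · rw [if_neg h1, if_pos h2] at h; split_ifs at h <;> omega
  · rw [if_neg h1, if_neg h2] at h
    rcases eq_or_ne a top with h3 | h3 <;> rcases eq_or_ne b top with h4 | h4
    · rw [h3, h4]
    · rw [if_pos h3, if_neg h4] at h; omega
    · rw [if_neg h3, if_pos h4] at h; omega
    · rw [if_neg h3, if_neg h4] at h; exact enc_inj (by omega)

lemma sto_of_inj {f : Bundle n p → ℕ} (hf : Function.Injective f) :
    IsStrictTotalOrder (Bundle n p) (fun a b => f b < f a) := by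
  refine { trichotomous := ?_, irrefl := ?_, trans := ?_ }
  · intro a b
    rcases lt_trichotomy (f a) (f b) with h | h | h
    · exact fun _ h2 => absurd h h2
    · exact fun _ _ => hf h
    · exact fun h1 _ => absurd h h1
  · intro a; exact lt_irrefl _
  · intro a b c h1 h2; exact lt_trans h2 h1

end AuxP
section AuxB
variable {n p : ℕ}

lemma key_bdag (O : Csam n p) (js : Fin n)
    (hgood : ∀ l : Fin p, Kval O js ≤ (l : ℕ) → kval O js (Oj O js l) = 1) :
    ∃ bdag : Bundle n p, ∀ i : Fin p, ∃ b : Bundle n p,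
      achievable O (AA n p) js (O.symm (js, i)) b ∧ b i = js ∧
      ∀ b' : Bundle n p, achievable O (AA n p) js (O.symm (js, i)) b' → b' ≠ b →
        (b = bdag ∧ bdag ≠ cst n p js ∧ b' ≠ bdag) := by
  set NS : Fin p → Prop :=
    fun i => ∃ b, achievable O (AA n p) js (O.symm (js, i)) b ∧ b ≠ cst n p js with hNSdef
  by_cases hNS : ∃ i₀ : Fin p, NS i₀
  · obtain ⟨i₀, hNS0⟩ := hNS
    obtain ⟨iL, hiLmem, hmax⟩ := Finset.exists_max_image
      ((Finset.univ : Finset (Fin p)).filter NS) (fun i => O.symm (js, i))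
      ⟨i₀, Finset.mem_filter.2 ⟨Finset.mem_univ _, hNS0⟩⟩
    obtain ⟨b₀, hb₀, hb₀ne⟩ := (Finset.mem_filter.1 hiLmem).2
    have hcon : ∃ bd : Bundle n p, achievable O (AA n p) js (O.symm (js, iL)) bd ∧
        bd ≠ cst n p js ∧ bd iL = js := by
      by_cases hk : kval O js iL = 1
      · refine ⟨b₀, hb₀, hb₀ne, ?_⟩
        by_contra hbne
        have havail := hb₀.2 iL (lt_irrefl _)
        have hk' := (kval_eq_one_iff O js iL).1 hk
        rcases lt_trichotomy (O.symm (b₀ iL, iL)) (O.symm (js, iL)) with h | h | h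
        · exact havail (b₀ iL) h rfl
        · exact hbne (congrArg Prod.fst (O.symm.injective h))
        · exact hk' (b₀ iL) h
      · have Hav : ∃ c' : Fin p, ∃ d : Fin n, O.symm (js, iL) < O.symm (js, c') ∧
            d ≠ js ∧ availAt O (AA n p) (O.symm (js, iL)) c' d := by
          by_contra hno
          push_neg at hno
          have hno' : ∀ c' : Fin p, O.symm (js, iL) < O.symm (js, c') →
              ∀ j₂ : Fin n, j₂ ≠ js → O.symm (j₂, c') < O.symm (js, iL) := by
            intro c' hc' j₂ hj₂
            have h := hno c' j₂ hc' hj₂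
            unfold availAt at h
            push_neg at h
            obtain ⟨j₃, h₃, h₃'⟩ := h
            have hj : j₃ = j₂ := h₃'
            rwa [hj] at h₃
          obtain ⟨lL, hlL⟩ := Oj_surj O js iL
          have hmem : (lL : ℕ) ∈ {K : ℕ | K < p ∧ NoInterruptF O js K} := by
            refine ⟨lL.2, ?_⟩
            intro lK hK l hl j₂ hj₂ hint
            have hlK : lK = lL := Fin.ext hK
            rw [hlK, hlL] at hint
            have h1 : O.symm (js, iL) < O.symm (js, Oj O js l) := by
              rw [← hlL]
              exact symm_Oj_strictMono O js (hlK ▸ hl)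
            exact lt_asymm hint.1 (hno' (Oj O js l) h1 j₂ hj₂)
          have hKle : Kval O js ≤ (lL : ℕ) := Nat.sInf_le hmem
          have := hgood lL hKle
          rw [hlL] at this
          exact absurd this hk
        obtain ⟨c', d, hcd1, hcd2, hcd3⟩ := Hav
        have hic : iL ≠ c' := fun h => absurd hcd1 (by rw [h]; exact lt_irrefl _)
        refine ⟨Function.update (cst n p js) c' d, ?_, ?_, ?_⟩
        · constructor
          · intro c hc
            have hcc : c ≠ c' := fun h => absurd hcd1 (not_lt.2 (le_of_lt (h ▸ hc)))
            rw [Function.update_of_ne hcc]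
            rfl
          · intro c hc
            rcases eq_or_ne c c' with rfl | hcc
            · rw [Function.update_self]
              exact hcd3
            · rw [Function.update_of_ne hcc]
              intro j₂ h₂ hd
              have hj : j₂ = js := hd
              rw [hj] at h₂
              exact hc h₂
        · intro h
          have := congrFun h c'
          rw [Function.update_self] at this
          exact hcd2 this
        · rw [Function.update_of_ne hic]
          rfl
    obtain ⟨bd, hach, hneq, hcomp⟩ := hcon
    refine ⟨bd, fun i => ?_⟩
    rcases le_or_gt (O.symm (js, i)) (O.symm (js, iL)) with hle | hlt
    · refine ⟨bd, ach_mono O js hle hach, ?_, fun b' _ hb' => ⟨rfl, hneq, hb'⟩⟩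
      rcases eq_or_ne i iL with rfl | hne
      · exact hcomp
      · have hlt' : O.symm (js, i) < O.symm (js, iL) :=
          lt_of_le_of_ne hle (fun h => hne (congrArg Prod.snd (O.symm.injective h)))
        exact hach.1 i hlt'
    · refine ⟨cst n p js, ach_cst O js _, rfl, ?_⟩
      intro b' hb' hbne
      exfalso
      have hNSi : NS i := ⟨b', hb', hbne⟩
      have := hmax i (Finset.mem_filter.2 ⟨Finset.mem_univ _, hNSi⟩)
      exact absurd hlt (not_lt.2 this)
  · push_neg at hNS
    refine ⟨cst n p js, fun i => ⟨cst n p js, ach_cst O js _, rfl, ?_⟩⟩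
    intro b' hb' hbne
    exact absurd ⟨b', hb', hbne⟩ (hNS i)

end AuxB
theorem statement12 (n p : ℕ) (hn : 0 < n) (hp : 0 < p) (O : Csam n p) :
    (∃ P : Profile n p, ValidProfile P ∧
      ∃ A : Fin n → Bundle n p, ValidAlloc A ∧ (∀ j, OptPlays O P A j) ∧
        ∃ j : Fin n, rank (P j) (A j) = n ^ p) ∧
    (∃ j : Fin n, ∀ l : Fin p, Kval O j ≤ (l : ℕ) → kval O j (Oj O j l) = 1) := by
  obtain ⟨js, hgood⟩ := exists_good n p hn hp O
  obtain ⟨bdag, hbd⟩ := key_bdag O js hgood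
  set P : Profile n p := fun j =>
    if j = js then (fun a b => rkS n p bdag (cst n p js) b < rkS n p bdag (cst n p js) a)
    else (fun a b => rkO n p (cst n p j) b < rkO n p (cst n p j) a) with hP
  refine ⟨⟨P, ?_, AA n p, ?_, ?_, js, ?_⟩, ⟨js, hgood⟩⟩
  · -- ValidProfile
    intro j
    simp only [hP]
    split_ifs with hj
    · exact sto_of_inj (rkS_inj _ _)
    · exact sto_of_inj (rkO_inj _)
  · -- ValidAlloc
    intro i a b h
    exact h
  · -- OptPlays
    intro j i
    by_cases hj : j = js
    · subst hj
      obtain ⟨b, hach, hcomp, hmaxp⟩ := hbd i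
      refine ⟨b, hach, ?_, hcomp.symm⟩
      intro b' hb' hne
      obtain ⟨hbd1, hbd2, hbd3⟩ := hmaxp b' hb' hne
      show P j b b'
      simp only [hP, if_pos rfl]
      have h1 : rkS n p bdag (cst n p j) b = n ^ p + 1 := by
        rw [hbd1]; unfold rkS; rw [if_neg hbd2, if_pos rfl]
      have h2 : rkS n p bdag (cst n p j) b' ≤ n ^ p := by
        unfold rkS
        rcases eq_or_ne b' (cst n p j) with h | h
        · rw [if_pos h]; omega
        · rw [if_neg h, if_neg hbd3]
          have := enc_lt b'
          omega
      omega
    · refine ⟨cst n p j, ach_cst O j _, ?_, rfl⟩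
      intro b' hb' hne
      show P j (cst n p j) b'
      simp only [hP, if_neg hj]
      unfold rkO
      rw [if_pos rfl, if_neg hne]
      exact enc_lt b'
  · -- rank of js's bundle is n^p
    show rank (P js) (AA n p js) = n ^ p
    unfold rank
    have hfil : (Finset.univ.filter fun c => P js c (AA n p js)) =
        Finset.univ.erase (cst n p js) := by
      rw [← Finset.filter_ne']
      apply Finset.filter_congr
      intro c _
      simp only [hP, if_pos rfl]
      have hA : AA n p js = cst n p js := rfl
      rw [hA]
      have hbot : rkS n p bdag (cst n p js) (cst n p js) = 0 := by
        unfold rkS; rw [if_pos rfl]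
      rw [hbot]
      constructor
      · intro h hc
        rw [hc, hbot] at h
        exact lt_irrefl _ h
      · intro h
        unfold rkS
        rw [if_neg h]
        split_ifs <;> omega
    rw [hfil, Finset.card_erase_of_mem (Finset.mem_univ _), Finset.card_univ, card_bundle]
    have hnp : 0 < n ^ p := pow_pos hn p
    omega
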